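/- Let U ⊂ ℝ^{n×n} be a compact set of matrices. Then every matrix A ∈ U has spectral radius strictly less than one if and only if there exists a symmetric n×n matrix P whose entries are real polynomials in the n² entries of A, such that: (a) the scalar polynomial (A, y) ↦ y^T P(A) y in the n² + n variables (entries of A, entries of y) is a sum of squares of polynomials, (b) P(A) is positive definite for every A ∈ U, and (c) P(A) − A^T P(A) A is positive definite for every A ∈ U. -/

import Mathlib

open Matrix

/-- Evaluation of a matrix of polynomials in the `n²` entries of a matrix `A`
at the matrix `A`. -/
noncomputable def matPolyEval {n : ℕ}
    (P : Matrix (Fin n) (Fin n) (MvPolynomial (Fin n × Fin n) ℝ))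
    (A : Matrix (Fin n) (Fin n) ℝ) : Matrix (Fin n) (Fin n) ℝ :=
  Matrix.of fun i j => MvPolynomial.eval (fun p => A p.1 p.2) (P i j)

namespace StmtAux

open Filter
open scoped NNReal ENNReal ComplexConjugate

noncomputable def Tc {n : ℕ} (B : Matrix (Fin n) (Fin n) ℂ) :
    EuclideanSpace ℂ (Fin n) →L[ℂ] EuclideanSpace ℂ (Fin n)  :=
  Matrix.toEuclideanCLM (𝕜 := ℂ) B

lemma cont_Tc {n : ℕ} : Continuous fun B : Matrix (Fin n) (Fin n) ℂ => Tc B := by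
  have h : (fun B : Matrix (Fin n) (Fin n) ℂ => Tc B) =
      fun B => LinearMap.toContinuousLinearMap (Matrix.toEuclideanLin B) := by
    funext B
    apply ContinuousLinearMap.coe_injective
    exact Matrix.coe_toEuclideanCLM_eq_toEuclideanLin B
  rw [h]
  exact LinearMap.continuous_of_finiteDimensional
    (((LinearMap.toContinuousLinearMap (𝕜 := ℂ)
        (E := EuclideanSpace ℂ (Fin n)) (F' := EuclideanSpace ℂ (Fin n))).toLinearMap).comp
      ((Matrix.toEuclideanLin (𝕜 := ℂ) (m := Fin n) (n := Fin n)).toLinearMap))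

lemma cont_norm_Tc {n : ℕ} (k : ℕ) :
    Continuous fun A : Matrix (Fin n) (Fin n) ℝ => ‖Tc ((A.map Complex.ofReal) ^ k)‖ := by
  have h1 : Continuous fun A : Matrix (Fin n) (Fin n) ℝ => (A.map Complex.ofReal) ^ k :=
    (Continuous.matrix_map continuous_id Complex.continuous_ofReal).pow k
  exact (cont_Tc.comp h1).norm

lemma step_A {n : ℕ} (B : Matrix (Fin n) (Fin n) ℂ)
    (h : ∀ μ ∈ spectrum ℂ B, ‖μ‖ < 1) : ∃ k, 1 ≤ k ∧ ‖Tc (B ^ k)‖ < 1 := by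
  rcases Nat.eq_zero_or_pos n with hn | hn
  · subst hn
    refine ⟨1, le_rfl, ?_⟩
    have hT : Tc (B ^ 1) = 0 := ContinuousLinearMap.ext fun x => Subsingleton.elim _ _
    rw [hT, norm_zero]
    norm_num
  haveI : NeZero n := ⟨hn.ne'⟩
  have hρ : spectralRadius ℂ (Tc B) < 1 := by
    apply spectrum.spectralRadius_lt_of_forall_lt
    intro z hz
    rw [show Tc B = Matrix.toEuclideanCLM (𝕜 := ℂ) B from rfl,
      AlgEquiv.spectrum_eq (Matrix.toEuclideanCLM (𝕜 := ℂ)) B] at hz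
    simpa [← NNReal.coe_lt_coe] using h z hz
  have hg := spectrum.pow_nnnorm_pow_one_div_tendsto_nhds_spectralRadius (Tc B)
  have hev : ∀ᶠ k : ℕ in atTop, ((‖(Tc B) ^ k‖₊ : ENNReal) ^ (1 / (k:ℝ))) < 1 :=
    hg.eventually_lt_const hρ
  obtain ⟨k, hk1, hk2⟩ := ((eventually_ge_atTop 1).and hev).exists
  refine ⟨k, hk1, ?_⟩
  have hTk : Tc (B ^ k) = (Tc B) ^ k := by simp [Tc, map_pow]
  rw [hTk]
  by_contra hc
  push_neg at hc
  have h0 : (1:ℝ≥0) ≤ ‖(Tc B) ^ k‖₊ := by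
    rw [← NNReal.coe_le_coe]; simpa using hc
  have h1 : (1 : ENNReal) ≤ (‖(Tc B) ^ k‖₊ : ENNReal) := by exact_mod_cast h0
  have : (1 : ENNReal) ≤ (‖(Tc B) ^ k‖₊ : ENNReal) ^ (1 / (k:ℝ)) := by
    calc (1 : ENNReal) = 1 ^ (1 / (k:ℝ)) := by rw [ENNReal.one_rpow]
    _ ≤ _ := ENNReal.rpow_le_rpow h1 (by positivity)
  exact absurd hk2 (not_lt.mpr this)

lemma step_B {n : ℕ} (U : Set (Matrix (Fin n) (Fin n) ℝ)) (hU : IsCompact U)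
    (h : ∀ A ∈ U, ∀ μ ∈ spectrum ℂ (A.map Complex.ofReal), ‖μ‖ < 1) :
    ∃ m, 1 ≤ m ∧ ∀ A ∈ U, ‖Tc ((A.map Complex.ofReal) ^ m)‖ < 1 := by
  set V : ℕ → Set (Matrix (Fin n) (Fin n) ℝ) :=
    fun k => {A | ‖Tc ((A.map Complex.ofReal) ^ (k + 1))‖ < 1} with hV
  have hopen : ∀ k, IsOpen (V k) := fun k =>
    isOpen_lt (cont_norm_Tc (k + 1)) continuous_const
  have hcov : U ⊆ ⋃ k, V k := by
    intro A hA
    obtain ⟨k, hk1, hk2⟩ := step_A (A.map Complex.ofReal) (h A hA)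
    obtain ⟨j, rfl⟩ := Nat.exists_eq_add_of_le hk1
    rw [show 1 + j = j + 1 from add_comm 1 j] at hk2
    exact Set.mem_iUnion.mpr ⟨j, hk2⟩
  obtain ⟨t, ht⟩ := hU.elim_finite_subcover V hopen hcov
  refine ⟨∏ k ∈ t, (k + 1), Nat.one_le_iff_ne_zero.mpr (by positivity), ?_⟩
  intro A hA
  obtain ⟨k, hk, hAk⟩ := Set.mem_iUnion₂.mp (ht hA)
  have hdvd : (k + 1) ∣ ∏ k ∈ t, (k + 1) := Finset.dvd_prod_of_mem _ hk
  obtain ⟨d, hd⟩ := hdvd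
  have hd1 : d ≠ 0 := by
    rintro rfl
    simp at hd
    exact absurd hd (by positivity)
  rw [hd, pow_mul]
  have hTd : Tc (((A.map Complex.ofReal) ^ (k+1)) ^ d)
      = (Tc ((A.map Complex.ofReal) ^ (k+1))) ^ d := by
    simp [Tc, map_pow]
  rw [hTd]
  calc ‖(Tc ((A.map Complex.ofReal) ^ (k+1))) ^ d‖
      ≤ ‖Tc ((A.map Complex.ofReal) ^ (k+1))‖ ^ d := norm_pow_le' _ (Nat.pos_of_ne_zero hd1)
    _ < 1 := pow_lt_one₀ (norm_nonneg _) hAk hd1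

lemma mulVec_complexify {n : ℕ} (M : Matrix (Fin n) (Fin n) ℝ) (x : Fin n → ℝ) :
    (M.map Complex.ofReal) *ᵥ (fun i => (x i : ℂ)) = fun i => ((M *ᵥ x) i : ℂ) := by
  funext i
  simp [Matrix.mulVec, dotProduct, Matrix.map_apply]

lemma norm_complexify {n : ℕ} (x : Fin n → ℝ) :
    ‖((WithLp.equiv 2 (Fin n → ℂ)).symm (fun i => (x i : ℂ)))‖ ^ 2 = ∑ i, x i ^ 2 := by
  rw [EuclideanSpace.norm_eq]
  rw [Real.sq_sqrt (by positivity)]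
  simp [sq_abs]

lemma posdef_one_sub_of_norm_lt {n : ℕ} (M : Matrix (Fin n) (Fin n) ℝ)
    (h : ‖Tc (M.map Complex.ofReal)‖ < 1) : (1 - Mᵀ * M).PosDef := by
  refine Matrix.posDef_iff_dotProduct_mulVec.mpr ⟨?_, ?_⟩
  · unfold Matrix.IsHermitian
    rw [Matrix.conjTranspose_eq_transpose_of_trivial, Matrix.transpose_sub,
      Matrix.transpose_one, Matrix.transpose_mul, Matrix.transpose_transpose]
  · intro x hx
    have hdot : star x ⬝ᵥ ((1 - Mᵀ * M) *ᵥ x) = ∑ i, x i ^ 2 - ∑ i, (M *ᵥ x) i ^ 2 := by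
      rw [star_trivial, Matrix.sub_mulVec, Matrix.one_mulVec, dotProduct_sub]
      congr 1
      · simp [dotProduct, sq]
      · rw [← Matrix.mulVec_mulVec, dotProduct_mulVec, Matrix.vecMul_transpose]
        simp [dotProduct, sq]
    rw [hdot]
    set z : EuclideanSpace ℂ (Fin n) := (WithLp.equiv 2 (Fin n → ℂ)).symm (fun i => (x i : ℂ))
      with hz
    have hTz : Tc (M.map Complex.ofReal) z
        = (WithLp.equiv 2 (Fin n → ℂ)).symm (fun i => ((M *ᵥ x) i : ℂ)) := by
      rw [hz, Tc, ← mulVec_complexify]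
      rfl
    have hnz : ‖z‖ ^ 2 = ∑ i, x i ^ 2 := norm_complexify x
    have hnTz : ‖Tc (M.map Complex.ofReal) z‖ ^ 2 = ∑ i, (M *ᵥ x) i ^ 2 := by
      rw [hTz]; exact norm_complexify _
    have hb := (Tc (M.map Complex.ofReal)).le_opNorm z
    have hzpos : 0 < ‖z‖ := by
      obtain ⟨i, hi⟩ := Function.ne_iff.mp hx
      have : 0 < ∑ i, x i ^ 2 :=
        Finset.sum_pos' (fun j _ => sq_nonneg _)
          ⟨i, Finset.mem_univ i, by nlinarith [sq_nonneg (x i), sq_abs (x i), abs_pos.mpr hi]⟩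
      nlinarith [norm_nonneg z]
    have hT0 := (Tc (M.map Complex.ofReal)).opNorm_nonneg
    have hTz0 := norm_nonneg (Tc (M.map Complex.ofReal) z)
    have h2 : ‖Tc (M.map Complex.ofReal) z‖ ^ 2
        ≤ ‖Tc (M.map Complex.ofReal)‖ ^ 2 * ‖z‖ ^ 2 := by nlinarith
    have hT1 : ‖Tc (M.map Complex.ofReal)‖ ^ 2 < 1 := by nlinarith
    have h3 : ‖Tc (M.map Complex.ofReal)‖ ^ 2 * ‖z‖ ^ 2 < 1 * ‖z‖ ^ 2 :=
      mul_lt_mul_of_pos_right hT1 (by positivity)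
    nlinarith

noncomputable def Xmat (n : ℕ) : Matrix (Fin n) (Fin n) (MvPolynomial (Fin n × Fin n) ℝ) :=
  Matrix.of fun i j => MvPolynomial.X (i, j)

noncomputable def Pm (n m : ℕ) : Matrix (Fin n) (Fin n) (MvPolynomial (Fin n × Fin n) ℝ) :=
  ∑ k ∈ Finset.range m, ((Xmat n ^ k)ᵀ * (Xmat n ^ k))

lemma mapMatrix_Xmat {n : ℕ} (A : Matrix (Fin n) (Fin n) ℝ) :
    (MvPolynomial.eval (fun p : Fin n × Fin n => A p.1 p.2)).mapMatrix (Xmat n) = A := by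
  ext i j
  simp [Xmat, RingHom.mapMatrix_apply, Matrix.map_apply]

lemma matPolyEval_Pm {n : ℕ} (m : ℕ) (A : Matrix (Fin n) (Fin n) ℝ) :
    matPolyEval (Pm n m) A = ∑ k ∈ Finset.range m, ((A ^ k)ᵀ * (A ^ k)) := by
  have h : matPolyEval (Pm n m) A
      = (MvPolynomial.eval (fun p : Fin n × Fin n => A p.1 p.2)).mapMatrix (Pm n m) := rfl
  rw [h, Pm, map_sum]
  refine Finset.sum_congr rfl fun k _ => ?_
  rw [_root_.map_mul]
  congr 1
  · rw [RingHom.mapMatrix_apply, Matrix.transpose_map, ← RingHom.mapMatrix_apply, map_pow,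
      mapMatrix_Xmat]
  · rw [map_pow, mapMatrix_Xmat]

lemma Pm_transpose (n m : ℕ) : (Pm n m)ᵀ = Pm n m := by
  rw [Pm, Matrix.transpose_sum]
  refine Finset.sum_congr rfl fun k _ => ?_
  rw [Matrix.transpose_mul, Matrix.transpose_transpose]

lemma sum4_swap {α β γ δ M : Type*} [AddCommMonoid M] (s : Finset α) (t : Finset β)
    (u : Finset γ) (v : Finset δ) (f : α → β → γ → δ → M) :
    ∑ i ∈ s, ∑ j ∈ t, ∑ k ∈ u, ∑ l ∈ v, f i j k l
      = ∑ k ∈ u, ∑ l ∈ v, ∑ i ∈ s, ∑ j ∈ t, f i j k l :=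
  calc ∑ i ∈ s, ∑ j ∈ t, ∑ k ∈ u, ∑ l ∈ v, f i j k l
      = ∑ i ∈ s, ∑ k ∈ u, ∑ j ∈ t, ∑ l ∈ v, f i j k l :=
        Finset.sum_congr rfl fun _ _ => Finset.sum_comm
    _ = ∑ k ∈ u, ∑ i ∈ s, ∑ j ∈ t, ∑ l ∈ v, f i j k l := Finset.sum_comm
    _ = ∑ k ∈ u, ∑ i ∈ s, ∑ l ∈ v, ∑ j ∈ t, f i j k l :=
        Finset.sum_congr rfl fun _ _ => Finset.sum_congr rfl fun _ _ => Finset.sum_comm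
    _ = ∑ k ∈ u, ∑ l ∈ v, ∑ i ∈ s, ∑ j ∈ t, f i j k l :=
        Finset.sum_congr rfl fun _ _ => Finset.sum_comm

lemma sos_identity (n m : ℕ) :
    (∑ i : Fin n, ∑ j : Fin n,
      MvPolynomial.X (Sum.inr i) * MvPolynomial.X (Sum.inr j) *
        MvPolynomial.rename Sum.inl (Pm n m i j))
    = ∑ k ∈ Finset.range m, ∑ l : Fin n,
        (∑ i : Fin n, MvPolynomial.X (Sum.inr i) *
          MvPolynomial.rename (Sum.inl : (Fin n × Fin n) → (Fin n × Fin n) ⊕ Fin n)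
            ((Xmat n ^ k) l i)) ^ 2 := by
  have hPij : ∀ i j : Fin n, Pm n m i j
      = ∑ k ∈ Finset.range m, ∑ l : Fin n, (Xmat n ^ k) l i * (Xmat n ^ k) l j := by
    intro i j
    rw [Pm, Matrix.sum_apply]
    refine Finset.sum_congr rfl fun k _ => ?_
    rw [Matrix.mul_apply]
    simp [Matrix.transpose_apply]
  calc (∑ i : Fin n, ∑ j : Fin n,
      MvPolynomial.X (Sum.inr i) * MvPolynomial.X (Sum.inr j) *
        MvPolynomial.rename Sum.inl (Pm n m i j))
      = ∑ i : Fin n, ∑ j : Fin n, ∑ k ∈ Finset.range m, ∑ l : Fin n,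
          (MvPolynomial.X (Sum.inr i) * MvPolynomial.rename Sum.inl ((Xmat n ^ k) l i)) *
          (MvPolynomial.X (Sum.inr j) * MvPolynomial.rename Sum.inl ((Xmat n ^ k) l j)) := by
        refine Finset.sum_congr rfl fun i _ => Finset.sum_congr rfl fun j _ => ?_
        rw [hPij, map_sum, Finset.mul_sum]
        refine Finset.sum_congr rfl fun k _ => ?_
        rw [map_sum, Finset.mul_sum]
        refine Finset.sum_congr rfl fun l _ => ?_
        rw [_root_.map_mul]
        ring
    _ = ∑ k ∈ Finset.range m, ∑ l : Fin n, ∑ i : Fin n, ∑ j : Fin n,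
          (MvPolynomial.X (Sum.inr i) * MvPolynomial.rename Sum.inl ((Xmat n ^ k) l i)) *
          (MvPolynomial.X (Sum.inr j) * MvPolynomial.rename Sum.inl ((Xmat n ^ k) l j)) :=
        sum4_swap _ _ _ _ _
    _ = _ := by
        refine Finset.sum_congr rfl fun k _ => Finset.sum_congr rfl fun l _ => ?_
        rw [sq, Finset.sum_mul_sum]

lemma posdef_S {n : ℕ} (m : ℕ) (hm : 1 ≤ m) (A : Matrix (Fin n) (Fin n) ℝ) :
    (∑ k ∈ Finset.range m, ((A ^ k)ᵀ * A ^ k)).PosDef := by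
  obtain ⟨m', rfl⟩ := Nat.exists_eq_add_of_le hm
  rw [show 1 + m' = m' + 1 from add_comm 1 m', Finset.sum_range_succ']
  have hrest : (∑ k ∈ Finset.range m', ((A ^ (k+1))ᵀ * A ^ (k+1))).PosSemidef := by
    refine Finset.sum_induction _ _ (fun a b ha hb => ha.add hb) Matrix.PosSemidef.zero ?_
    intro k _
    have := Matrix.posSemidef_conjTranspose_mul_self (A ^ (k+1))
    rwa [Matrix.conjTranspose_eq_transpose_of_trivial] at this
  have h1 : ((A ^ 0)ᵀ * A ^ 0 : Matrix (Fin n) (Fin n) ℝ) = 1 := by simp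
  rw [h1]
  exact Matrix.PosDef.posSemidef_add hrest Matrix.PosDef.one

lemma telescope {n : ℕ} (m : ℕ) (A : Matrix (Fin n) (Fin n) ℝ) :
    (∑ k ∈ Finset.range m, ((A ^ k)ᵀ * A ^ k))
      - Aᵀ * (∑ k ∈ Finset.range m, ((A ^ k)ᵀ * A ^ k)) * A
    = 1 - (A ^ m)ᵀ * A ^ m := by
  have h2 : Aᵀ * (∑ k ∈ Finset.range m, ((A ^ k)ᵀ * A ^ k)) * A
      = ∑ k ∈ Finset.range m, ((A ^ (k+1))ᵀ * A ^ (k+1)) := by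
    rw [Finset.mul_sum, Finset.sum_mul]
    refine Finset.sum_congr rfl fun k _ => ?_
    rw [pow_succ, Matrix.transpose_mul]
    noncomm_ring
  rw [h2]
  rw [sub_eq_sub_iff_add_eq_add]
  have h1 : (∑ k ∈ Finset.range m, ((A^k)ᵀ * A^k)) + (A^m)ᵀ * A^m
      = ∑ k ∈ Finset.range m, ((A^(k+1))ᵀ * A^(k+1)) + 1 := by
    rw [← Finset.sum_range_succ, Finset.sum_range_succ']
    simp
  rw [h1, add_comm]

lemma map_pow' {n : ℕ} (A : Matrix (Fin n) (Fin n) ℝ) (m : ℕ) :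
    (A ^ m).map Complex.ofReal = (A.map Complex.ofReal) ^ m := by
  have h := map_pow (Complex.ofRealHom.mapMatrix (m := Fin n)) A m
  rw [RingHom.mapMatrix_apply, RingHom.mapMatrix_apply] at h
  exact h

lemma exists_eigvec {n : ℕ} (B : Matrix (Fin n) (Fin n) ℂ) {μ : ℂ}
    (hμ : μ ∈ spectrum ℂ B) : ∃ v : Fin n → ℂ, v ≠ 0 ∧ B *ᵥ v = μ • v := by
  rw [spectrum.mem_iff] at hμ
  rw [Matrix.isUnit_iff_isUnit_det, isUnit_iff_ne_zero, not_ne_iff] at hμ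
  obtain ⟨v, hv, hv2⟩ := (Matrix.exists_mulVec_eq_zero_iff).mpr hμ
  refine ⟨v, hv, ?_⟩
  rw [Matrix.sub_mulVec] at hv2
  have halg : (algebraMap ℂ (Matrix (Fin n) (Fin n) ℂ)) μ *ᵥ v = μ • v := by
    rw [Matrix.algebraMap_eq_diagonal]
    funext i
    simp [Matrix.mulVec_diagonal]
  rw [halg, sub_eq_zero] at hv2
  exact hv2.symm

lemma re_quadform {n : ℕ} (Q : Matrix (Fin n) (Fin n) ℝ) (v : Fin n → ℂ) :
    (star v ⬝ᵥ ((Q.map Complex.ofReal) *ᵥ v)).re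
      = (fun i => (v i).re) ⬝ᵥ (Q *ᵥ fun i => (v i).re)
        + (fun i => (v i).im) ⬝ᵥ (Q *ᵥ fun i => (v i).im) := by
  simp only [dotProduct, Matrix.mulVec, Pi.star_apply, Matrix.map_apply,
    Finset.mul_sum, Finset.sum_mul]
  rw [Complex.re_sum]
  rw [← Finset.sum_add_distrib]
  refine Finset.sum_congr rfl fun i _ => ?_
  rw [Complex.re_sum, ← Finset.sum_add_distrib]
  refine Finset.sum_congr rfl fun j _ => ?_
  simp [Complex.mul_re, RCLike.star_def, Complex.conj_re, Complex.conj_im]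

lemma posdef_complexify {n : ℕ} {Q : Matrix (Fin n) (Fin n) ℝ} (hQ : Q.PosDef)
    (v : Fin n → ℂ) (hv : v ≠ 0) :
    0 < (star v ⬝ᵥ ((Q.map Complex.ofReal) *ᵥ v)).re := by
  rw [re_quadform]
  set a : Fin n → ℝ := fun i => (v i).re
  set b : Fin n → ℝ := fun i => (v i).im
  have hab : a ≠ 0 ∨ b ≠ 0 := by
    by_contra hc
    push_neg at hc
    apply hv
    funext i
    have h1 := congrFun hc.1 i
    have h2 := congrFun hc.2 i
    exact Complex.ext (by simpa using h1) (by simpa using h2)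
  rcases hab with ha | hb
  · have h1 := hQ.dotProduct_mulVec_pos ha
    have h2 := hQ.posSemidef.dotProduct_mulVec_nonneg b
    rw [star_trivial] at h1
    rw [star_trivial] at h2
    linarith
  · have h1 := hQ.posSemidef.dotProduct_mulVec_nonneg a
    have h2 := hQ.dotProduct_mulVec_pos hb
    rw [star_trivial] at h1 h2
    linarith

lemma lyapunov_reverse {n : ℕ} (A Q : Matrix (Fin n) (Fin n) ℝ) (hQ : Q.PosDef)
    (hR : (Q - Aᵀ * Q * A).PosDef) {μ : ℂ} (hμ : μ ∈ spectrum ℂ (A.map Complex.ofReal)) :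
    ‖μ‖ < 1 := by
  obtain ⟨v, hv, heig⟩ := exists_eigvec _ hμ
  set B : Matrix (Fin n) (Fin n) ℂ := A.map Complex.ofReal with hB
  set Q' : Matrix (Fin n) (Fin n) ℂ := Q.map Complex.ofReal with hQ'
  have hc : 0 < (star v ⬝ᵥ (Q' *ᵥ v)).re := posdef_complexify hQ v hv
  have hr : 0 < (star v ⬝ᵥ (((Q - Aᵀ * Q * A).map Complex.ofReal) *ᵥ v)).re :=
    posdef_complexify hR v hv
  have hmap : (Q - Aᵀ * Q * A).map Complex.ofReal = Q' - Bᵀ * Q' * B := by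
    show Complex.ofRealHom.mapMatrix (Q - Aᵀ * Q * A) = _
    rw [map_sub, _root_.map_mul, _root_.map_mul]
    have hA : Complex.ofRealHom.mapMatrix Aᵀ = Bᵀ := by
      rw [RingHom.mapMatrix_apply, Matrix.transpose_map]; rfl
    rw [hA]
    rfl
  rw [hmap] at hr
  have hsecond : star v ⬝ᵥ ((Bᵀ * Q' * B) *ᵥ v)
      = (conj μ * μ) * (star v ⬝ᵥ (Q' *ᵥ v)) := by
    rw [← Matrix.mulVec_mulVec, ← Matrix.mulVec_mulVec, dotProduct_mulVec,
      Matrix.vecMul_transpose]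
    have hstar : B *ᵥ star v = star (B *ᵥ v) := by
      funext i
      simp [Matrix.mulVec, dotProduct, Matrix.map_apply, RCLike.star_def, map_sum,
        Complex.conj_ofReal, hB]
    rw [hstar, heig]
    rw [star_smul, smul_dotProduct, Matrix.mulVec_smul, dotProduct_smul]
    simp [RCLike.star_def]
    ring
  rw [Matrix.sub_mulVec, dotProduct_sub, hsecond] at hr
  have hre : ((conj μ * μ) * (star v ⬝ᵥ (Q' *ᵥ v))).re
      = Complex.normSq μ * (star v ⬝ᵥ (Q' *ᵥ v)).re := by
    rw [show (conj μ * μ : ℂ) = ((Complex.normSq μ : ℝ) : ℂ) from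
      (Complex.normSq_eq_conj_mul_self).symm, Complex.re_ofReal_mul]
  rw [Complex.sub_re, hre] at hr
  have hns : Complex.normSq μ < 1 := by nlinarith
  have habs : ‖μ‖ ^ 2 = Complex.normSq μ := by
    rw [Complex.normSq_eq_norm_sq]
  nlinarith [norm_nonneg μ]

end StmtAux

/-- A compact set `U` of matrices consists only of Schur-stable matrices
(spectral radius `< 1`) if and only if there is a symmetric matrix `P(A)` of
polynomials in the entries of `A` which is an SOS matrix (i.e. `yᵀ P(A) y` is a sum
of squares of polynomials in `(A, y)`), with `P(A) ≻ 0` and `P(A) - Aᵀ P(A) A ≻ 0`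
for every `A ∈ U`. -/
theorem stmt_11 (n : ℕ) (U : Set (Matrix (Fin n) (Fin n) ℝ)) (hU : IsCompact U) :
    (∀ A ∈ U, ∀ μ ∈ spectrum ℂ (A.map Complex.ofReal), ‖μ‖ < 1) ↔
    ∃ P : Matrix (Fin n) (Fin n) (MvPolynomial (Fin n × Fin n) ℝ),
      Pᵀ = P ∧
      (∃ (k : ℕ) (q : Fin k → MvPolynomial ((Fin n × Fin n) ⊕ Fin n) ℝ),
        (∑ i : Fin n, ∑ j : Fin n,
          MvPolynomial.X (Sum.inr i) * MvPolynomial.X (Sum.inr j) *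
            MvPolynomial.rename Sum.inl (P i j)) = ∑ t, q t ^ 2) ∧
      (∀ A ∈ U, (matPolyEval P A).PosDef) ∧
      (∀ A ∈ U, (matPolyEval P A - Aᵀ * matPolyEval P A * A).PosDef) := by
  constructor
  · intro h
    obtain ⟨m, hm, hnorm⟩ := StmtAux.step_B U hU h
    set g : Fin m × Fin n → MvPolynomial ((Fin n × Fin n) ⊕ Fin n) ℝ :=
      fun p => ∑ i : Fin n, MvPolynomial.X (Sum.inr i) *
        MvPolynomial.rename (Sum.inl : (Fin n × Fin n) → (Fin n × Fin n) ⊕ Fin n)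
          ((StmtAux.Xmat n ^ (p.1 : ℕ)) p.2 i) with hg
    refine ⟨StmtAux.Pm n m, StmtAux.Pm_transpose n m, ⟨m * n, fun t => g (finProdFinEquiv.symm t), ?_⟩, ?_, ?_⟩
    · calc (∑ i : Fin n, ∑ j : Fin n,
          MvPolynomial.X (Sum.inr i) * MvPolynomial.X (Sum.inr j) *
            MvPolynomial.rename Sum.inl (StmtAux.Pm n m i j))
          = ∑ k ∈ Finset.range m, ∑ l : Fin n,
              (∑ i : Fin n, MvPolynomial.X (Sum.inr i) *
                MvPolynomial.rename (Sum.inl : (Fin n × Fin n) → (Fin n × Fin n) ⊕ Fin n)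
                  ((StmtAux.Xmat n ^ k) l i)) ^ 2 := StmtAux.sos_identity n m
        _ = ∑ k : Fin m, ∑ l : Fin n, g (k, l) ^ 2 := by
            rw [← Fin.sum_univ_eq_sum_range (fun k => ∑ l : Fin n,
              (∑ i : Fin n, MvPolynomial.X (Sum.inr i) *
                MvPolynomial.rename (Sum.inl : (Fin n × Fin n) → (Fin n × Fin n) ⊕ Fin n)
                  ((StmtAux.Xmat n ^ k) l i)) ^ 2) m]
        _ = ∑ p : Fin m × Fin n, g p ^ 2 := by rw [Fintype.sum_prod_type]
        _ = ∑ t : Fin (m * n), g (finProdFinEquiv.symm t) ^ 2 :=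
            (Equiv.sum_comp finProdFinEquiv.symm (fun p => g p ^ 2)).symm
    · intro A hA
      rw [StmtAux.matPolyEval_Pm]
      exact StmtAux.posdef_S m hm A
    · intro A hA
      rw [StmtAux.matPolyEval_Pm, StmtAux.telescope]
      apply StmtAux.posdef_one_sub_of_norm_lt
      rw [StmtAux.map_pow']
      exact hnorm A hA
  · rintro ⟨P, -, -, hP3, hP4⟩ A hA μ hμ
    exact StmtAux.lyapunov_reverse A (matPolyEval P A) (hP3 A hA) (hP4 A hA) hμ
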